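/- arXiv:1410.0862 — 3 statements merged into one kernel-verified Lean document; each statement's English description precedes it below -/
import Mathlib

section
/- Let B be a real 3×3 matrix, h ∈ ℝ, and suppose m₀, m₁ ∈ ℝ³ satisfy the implicit midpoint relation m₁ = m₀ + h · (μ × (B μ)) where μ = (m₀ + m₁)/2. Then ‖m₁‖ = ‖m₀‖. -/
open Matrix

/-- The cross product on `ℝ³` viewed as `EuclideanSpace ℝ (Fin 3)`. -/
noncomputable def cross3 (u v : EuclideanSpace ℝ (Fin 3)) : EuclideanSpace ℝ (Fin 3) :=
  WithLp.toLp 2 (crossProduct (u : Fin 3 → ℝ) (v : Fin 3 → ℝ))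

/-- The matrix-vector product of a `3 × 3` real matrix with a vector of
`EuclideanSpace ℝ (Fin 3)`. -/
noncomputable def matVec3 (A : Matrix (Fin 3) (Fin 3) ℝ) (v : EuclideanSpace ℝ (Fin 3)) :
    EuclideanSpace ℝ (Fin 3) :=
  WithLp.toLp 2 (A *ᵥ (v : Fin 3 → ℝ))

lemma cross3_inner_self (u v : EuclideanSpace ℝ (Fin 3)) :
    (inner ℝ (cross3 u v) u : ℝ) = 0 := by
  simp only [EuclideanSpace.inner_eq_star_dotProduct]
  simp [cross3, crossProduct, dotProduct, Fin.sum_univ_three]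
  ring

theorem implicit_midpoint_preserves_norm
    (B : Matrix (Fin 3) (Fin 3) ℝ) (h : ℝ)
    (m₀ m₁ : EuclideanSpace ℝ (Fin 3))
    (hmid : m₁ = m₀ + h • cross3 (((1 : ℝ) / 2) • (m₀ + m₁)) (matVec3 B (((1 : ℝ) / 2) • (m₀ + m₁)))) :
    ‖m₁‖ = ‖m₀‖ := by
  set μ : EuclideanSpace ℝ (Fin 3) := ((1 : ℝ) / 2) • (m₀ + m₁) with hμ
  set c : EuclideanSpace ℝ (Fin 3) := cross3 μ (matVec3 B μ) with hc
  have hd : m₁ - m₀ = h • c := by rw [hmid]; abel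
  have hsum : m₀ + m₁ = (2 : ℝ) • μ := by
    rw [hμ, smul_smul]; norm_num
  have hkey : (inner ℝ (m₁ - m₀) (m₀ + m₁) : ℝ) = 0 := by
    rw [hd, hsum, real_inner_smul_left, real_inner_smul_right, cross3_inner_self]
    ring
  have hnorm : ‖m₁‖ ^ 2 = ‖m₀‖ ^ 2 := by
    have := hkey
    rw [inner_sub_left, inner_add_right, inner_add_right] at this
    rw [real_inner_comm m₀ m₁] at this
    have h0 : (inner ℝ m₁ m₁ : ℝ) = inner ℝ m₀ m₀ := by linarith
    rw [real_inner_self_eq_norm_sq, real_inner_self_eq_norm_sq] at h0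
    simpa [sq] using h0
  have := abs_eq_abs.mpr (Or.inl (by nlinarith [norm_nonneg m₀, norm_nonneg m₁] : ‖m₁‖ = ‖m₀‖))
  nlinarith [norm_nonneg m₀, norm_nonneg m₁, hnorm]
end

section
/- Let B be a symmetric real 3×3 matrix, h ∈ ℝ, and suppose m₀, m₁ ∈ ℝ³ satisfy the implicit midpoint relation m₁ = m₀ + h · (μ × (B μ)) where μ = (m₀ + m₁)/2. Then ⟪m₁, B m₁⟫ = ⟪m₀, B m₀⟫, i.e., the implicit midpoint rule exactly preserves the energy ½ mᵀ B m. -/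
open Matrix

theorem implicit_midpoint_preserves_energy
    (B : Matrix (Fin 3) (Fin 3) ℝ) (hB : B.IsSymm) (h : ℝ)
    (m₀ m₁ : EuclideanSpace ℝ (Fin 3))
    (hmid : m₁ = m₀ + h • cross3 (((1 : ℝ) / 2) • (m₀ + m₁)) (matVec3 B (((1 : ℝ) / 2) • (m₀ + m₁)))) :
    (inner ℝ m₁ (matVec3 B m₁) : ℝ) = inner ℝ m₀ (matVec3 B m₀) := by
  have e0 := congrArg (fun v : EuclideanSpace ℝ (Fin 3) => v 0) hmid
  have e1 := congrArg (fun v : EuclideanSpace ℝ (Fin 3) => v 1) hmid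
  have e2 := congrArg (fun v : EuclideanSpace ℝ (Fin 3) => v 2) hmid
  simp only [cross3, matVec3, PiLp.toLp_apply, cross_apply, mulVec, dotProduct, Fin.sum_univ_three,
    PiLp.add_apply, PiLp.smul_apply, smul_eq_mul, Matrix.cons_val_zero, Matrix.cons_val_one,
    Matrix.head_cons, Matrix.cons_val_two, Matrix.tail_cons] at e0 e1 e2
  simp only [matVec3, PiLp.toLp_apply, PiLp.inner_apply, RCLike.inner_apply, conj_trivial, mulVec, dotProduct,
    Fin.sum_univ_three]
  have h01 := hB.apply 0 1
  have h02 := hB.apply 0 2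
  have h12 := hB.apply 1 2
  linear_combination
    (B 0 0 * (m₀ 0 + m₁ 0) + B 0 1 * (m₀ 1 + m₁ 1) + B 0 2 * (m₀ 2 + m₁ 2)) * e0 +
    (B 1 0 * (m₀ 0 + m₁ 0) + B 1 1 * (m₀ 1 + m₁ 1) + B 1 2 * (m₀ 2 + m₁ 2)) * e1 +
    (B 2 0 * (m₀ 0 + m₁ 0) + B 2 1 * (m₀ 1 + m₁ 1) + B 2 2 * (m₀ 2 + m₁ 2)) * e2 +
    (m₀ 1 * m₁ 0 - m₀ 0 * m₁ 1) * h01 +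
    (m₀ 2 * m₁ 0 - m₀ 0 * m₁ 2) * h02 +
    (m₀ 2 * m₁ 1 - m₀ 1 * m₁ 2) * h12
end

section
/- Let n ≥ 1, h > 0, a ∈ ℝ, and let W₁, …, Wₙ be independent real random variables each Gaussian with mean 0 and variance h. Let φ : ℝ³ → ℝ³ be any map satisfying ‖φ(x)‖ = ‖x‖ for all x, and define the splitting iterates by m_{j+1} = exp(a W_{j+1} − ½ a² h) · φ(m_j) starting from a fixed m₀ ∈ ℝ³. Then 𝔼[‖m_n‖] = ‖m₀‖. -/
open MeasureTheory ProbabilityTheory Real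
open scoped NNReal ENNReal

lemma gaussian_exp_integral (t : ℝ) {h : ℝ} (hh : 0 < h) :
    ∫ x, Real.exp (t * x) ∂(gaussianReal 0 h.toNNReal) = Real.exp (t ^ 2 * h / 2) := by
  have hv : h.toNNReal ≠ 0 := by simp [Real.toNNReal_eq_zero, not_le, hh]
  have hvr : ((h.toNNReal : ℝ≥0) : ℝ) = h := Real.coe_toNNReal h hh.le
  rw [gaussianReal_of_var_ne_zero 0 hv]
  have hpdf : gaussianPDF 0 h.toNNReal
      = fun x => (((gaussianPDFReal 0 h.toNNReal x).toNNReal : ℝ≥0) : ℝ≥0∞) := by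
    funext x; rfl
  have hmeas : Measurable fun x => (gaussianPDFReal 0 h.toNNReal x).toNNReal :=
    (measurable_gaussianPDFReal 0 h.toNNReal).real_toNNReal
  rw [hpdf, integral_withDensity_eq_integral_smul hmeas]
  have key : ∀ x : ℝ, ((gaussianPDFReal 0 h.toNNReal x).toNNReal : ℝ≥0) • Real.exp (t * x)
      = Real.exp (t ^ 2 * h / 2) * gaussianPDFReal (t * h) h.toNNReal x := by
    intro x
    rw [NNReal.smul_def, smul_eq_mul, Real.coe_toNNReal _ (gaussianPDFReal_nonneg _ _ x)]
    simp only [gaussianPDFReal, hvr]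
    have h1 : -(x - 0) ^ 2 / (2 * h) + t * x = t ^ 2 * h / 2 + -(x - t * h) ^ 2 / (2 * h) := by
      field_simp
      ring
    rw [mul_assoc (√(2 * π * h))⁻¹, ← Real.exp_add, h1, Real.exp_add]
    ring
  simp_rw [key]
  rw [integral_const_mul, integral_gaussianPDFReal_eq_one _ hv, mul_one]

theorem splitting_preserves_norm_in_expectation
    {Ω : Type*} [MeasureSpace Ω] [IsProbabilityMeasure (ℙ : Measure Ω)]
    (n : ℕ) (hn : 1 ≤ n) (h a : ℝ) (hh : 0 < h)
    (W : Fin n → Ω → ℝ) (hWmeas : ∀ j, Measurable (W j))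
    (hWindep : iIndepFun W ℙ)
    (hWlaw : ∀ j, Measure.map (W j) ℙ = gaussianReal 0 h.toNNReal)
    (φ : EuclideanSpace ℝ (Fin 3) → EuclideanSpace ℝ (Fin 3))
    (hφ : ∀ x, ‖φ x‖ = ‖x‖)
    (m₀ : EuclideanSpace ℝ (Fin 3))
    (m : ℕ → Ω → EuclideanSpace ℝ (Fin 3))
    (hm0 : ∀ ω, m 0 ω = m₀)
    (hrec : ∀ j : Fin n, ∀ ω,
      m (j + 1) ω = Real.exp (a * W j ω - a ^ 2 * h / 2) • φ (m j ω)) :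
    (∫ ω, ‖m n ω‖ ∂ℙ) = ‖m₀‖ := by
  classical
  set W' : ℕ → Ω → ℝ := fun i ω => if hi : i < n then W ⟨i, hi⟩ ω else 0 with hW'
  -- norm formula
  have hnorm : ∀ k, k ≤ n → ∀ ω,
      ‖m k ω‖ = ‖m₀‖ * Real.exp (∑ i ∈ Finset.range k, (a * W' i ω - a ^ 2 * h / 2)) := by
    intro k
    induction k with
    | zero => intro _ ω; simp [hm0]
    | succ k ih =>
      intro hk ω
      have hkn : k < n := hk
      have hr := hrec ⟨k, hkn⟩ ω
      simp only [Fin.val_mk] at hr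
      rw [hr, norm_smul, hφ, ih (le_of_lt hkn) ω, Finset.sum_range_succ,
        Real.norm_eq_abs, abs_of_pos (Real.exp_pos _), Real.exp_add]
      have hW'k : W' k ω = W ⟨k, hkn⟩ ω := by simp [hW', hkn]
      rw [hW'k]
      ring
  -- sum simplification
  have hsum : ∀ ω, (∑ i ∈ Finset.range n, (a * W' i ω - a ^ 2 * h / 2))
      = a * (∑ i : Fin n, W i ω) - n * (a ^ 2 * h / 2) := by
    intro ω
    rw [Finset.sum_sub_distrib, ← Finset.mul_sum, Finset.sum_const, Finset.card_range,
      nsmul_eq_mul]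
    congr 2
    rw [← Fin.sum_univ_eq_sum_range (fun i => W' i ω) n]
    exact Finset.sum_congr rfl fun i _ => by simp [hW', i.2]
  have hmain : ∀ ω, ‖m n ω‖
      = (‖m₀‖ * Real.exp (-(n * (a ^ 2 * h / 2)))) * Real.exp (a * (∑ i : Fin n, W i ω)) := by
    intro ω
    rw [hnorm n le_rfl ω, hsum ω, sub_eq_add_neg, Real.exp_add]
    ring
  simp_rw [hmain]
  rw [integral_const_mul]
  -- the integral is the mgf of the sum
  have hmgf : (∫ ω, Real.exp (a * (∑ i : Fin n, W i ω)) ∂ℙ)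
      = Real.exp (n * (a ^ 2 * h / 2)) := by
    have hS : (fun ω => Real.exp (a * (∑ i : Fin n, W i ω)))
        = fun ω => Real.exp (a * (∑ i : Fin n, W i) ω) := by
      funext ω; simp
    rw [hS]
    have := hWindep.mgf_sum (t := a) hWmeas Finset.univ
    simp only [mgf] at this
    rw [this]
    have heach : ∀ i : Fin n, (∫ ω, Real.exp (a * W i ω) ∂ℙ) = Real.exp (a ^ 2 * h / 2) := by
      intro i
      have : (∫ ω, Real.exp (a * W i ω) ∂ℙ)
          = ∫ x, Real.exp (a * x) ∂(Measure.map (W i) ℙ) := by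
        rw [integral_map (hWmeas i).aemeasurable]
        exact (measurable_const.mul measurable_id).exp.aestronglyMeasurable
      rw [this, hWlaw i, gaussian_exp_integral a hh]
    simp only [heach]
    rw [Finset.prod_const, Finset.card_univ, Fintype.card_fin, ← Real.exp_nat_mul]
  rw [hmgf, mul_assoc, ← Real.exp_add, neg_add_cancel, Real.exp_zero, mul_one]
end
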